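/- Let k ≥ 1 and let X be a nonempty family of subsets of {1,…,k} that is closed under symmetric difference (S, T ∈ X implies S Δ T ∈ X). If S ⊆ {1,…,k} satisfies {W ⊆ {1,…,k} : |S ∩ W| is odd} ⊆ ⋃_{T ∈ X} {W ⊆ {1,…,k} : |T ∩ W| is odd}, then S ∈ X. (In the language of R_k: if X ⊆ A(R_k) is closed under a_S, a_T ↦ a_{SΔT} and N(a_S) ⊆ N(X), then a_S ∈ X.) -/

import Mathlib

private def ind {k : ℕ} (S : Finset (Fin k)) : Fin k → ZMod 2 :=
  fun i => if i ∈ S then 1 else 0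

private lemma zmod2_cases : ∀ x : ZMod 2, x = 0 ∨ x = 1 := by decide

private lemma ind_inj {k : ℕ} : Function.Injective (ind (k := k)) := by
  intro S T h
  ext i
  have := congrFun h i
  unfold ind at this
  by_cases hS : i ∈ S <;> by_cases hT : i ∈ T <;> simp_all

private lemma ind_symmDiff {k : ℕ} (S T : Finset (Fin k)) :
    ind (symmDiff S T) = ind S + ind T := by
  funext i
  simp only [ind, Pi.add_apply, Finset.mem_symmDiff]
  by_cases hS : i ∈ S <;> by_cases hT : i ∈ T <;> simp [hS, hT] <;> decide

private lemma dot_eq_card {k : ℕ} (S W : Finset (Fin k)) :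
    (∑ i, ind S i * ind W i) = ((S ∩ W).card : ZMod 2) := by
  have h : ∀ x : Fin k, ind S x * ind W x = if x ∈ S ∩ W then 1 else 0 := by
    intro x
    simp only [ind, Finset.mem_inter]
    by_cases hS : x ∈ S <;> by_cases hW : x ∈ W <;> simp [hS, hW]
  rw [Finset.sum_congr rfl (fun x _ => h x), Finset.sum_ite_mem, Finset.univ_inter,
    Finset.sum_const, nsmul_eq_mul, mul_one]

private lemma cast_mod_two {n : ℕ} : ((n : ZMod 2)) = ((n % 2 : ℕ) : ZMod 2) := by
  conv_lhs => rw [← Nat.mod_add_div n 2]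
  push_cast
  rw [show (2 : ZMod 2) = 0 from by decide]
  ring

private lemma odd_iff_cast {n : ℕ} : Odd n ↔ (n : ZMod 2) = 1 := by
  rw [Nat.odd_iff]
  constructor
  · intro h; rw [cast_mod_two, h]; rfl
  · intro h
    rcases Nat.mod_two_eq_zero_or_one n with h2 | h2
    · rw [cast_mod_two, h2] at h
      exact absurd h (by decide)
    · exact h2

/-- let `X` be a nonempty family of subsets of `{1,…,k}` closed under
symmetric difference. If `S` satisfies `N(a_S) ⊆ N(X)` in `R_k`, i.e.
`{W : |S ∩ W| odd} ⊆ ⋃_{T ∈ X} {W : |T ∩ W| odd}`, then `S ∈ X`. -/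
theorem mem_of_neighborhood_subset (k : ℕ) (hk : 1 ≤ k)
    (X : Set (Finset (Fin k))) (hne : X.Nonempty)
    (hclosed : ∀ S ∈ X, ∀ T ∈ X, symmDiff S T ∈ X)
    (S : Finset (Fin k))
    (hsub : {W : Finset (Fin k) | Odd (S ∩ W).card} ⊆
      ⋃ T ∈ X, {W : Finset (Fin k) | Odd (T ∩ W).card}) :
    S ∈ X := by
  classical
  obtain ⟨T₀, hT₀⟩ := hne
  have hzero : (∅ : Finset (Fin k)) ∈ X := by
    have := hclosed T₀ hT₀ T₀ hT₀
    simpa [symmDiff_self] using this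
  let V : Submodule (ZMod 2) (Fin k → ZMod 2) :=
    { carrier := ind '' X
      add_mem' := by
        rintro _ _ ⟨a, ha, rfl⟩ ⟨b, hb, rfl⟩
        exact ⟨symmDiff a b, hclosed a ha b hb, ind_symmDiff a b⟩
      zero_mem' := ⟨∅, hzero, by funext i; simp [ind]⟩
      smul_mem' := by
        rintro c _ ⟨a, ha, rfl⟩
        fin_cases c
        · exact ⟨∅, hzero, by funext i; show _ = (0 : ZMod 2) * ind a i; simp [ind]⟩
        · exact ⟨a, ha, by funext i; show _ = (1 : ZMod 2) * ind a i; simp [ind]⟩ }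
  suffices h : ind S ∈ V by
    obtain ⟨T, hT, hTS⟩ := h
    rwa [← ind_inj hTS]
  rw [← (Subspace.forall_mem_dualAnnihilator_apply_eq_zero_iff V (ind S))]
  intro φ hφ
  set w : Fin k → ZMod 2 := fun i => φ (fun j => if i = j then 1 else 0) with hw
  have hφdot : ∀ v : Fin k → ZMod 2, φ v = ∑ i, v i * w i := by
    intro v
    conv_lhs => rw [pi_eq_sum_univ v]
    rw [map_sum]
    exact Finset.sum_congr rfl fun i _ => by rw [map_smul, smul_eq_mul]
  set W : Finset (Fin k) := Finset.univ.filter (fun i => w i = 1) with hWdef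
  have hindW : ind W = w := by
    funext i
    simp only [ind, hWdef, Finset.mem_filter, Finset.mem_univ, true_and]
    rcases zmod2_cases (w i) with h | h <;> simp [h]
  have key : ∀ T : Finset (Fin k), φ (ind T) = ((T ∩ W).card : ZMod 2) := by
    intro T
    rw [hφdot, ← hindW, dot_eq_card]
  rw [key S]
  by_contra hne1
  have hone : ((S ∩ W).card : ZMod 2) = 1 := by
    rcases zmod2_cases ((S ∩ W).card : ZMod 2) with h | h
    · exact absurd h hne1
    · exact h
  have hmem : W ∈ {W : Finset (Fin k) | Odd (S ∩ W).card} := odd_iff_cast.mpr hone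
  obtain ⟨s, ⟨T, rfl⟩, hs⟩ := hsub hmem
  simp only [Set.mem_iUnion, Set.mem_setOf_eq] at hs
  obtain ⟨hTX, hodd⟩ := hs
  have hz : φ (ind T) = 0 := (Submodule.mem_dualAnnihilator φ).mp hφ (ind T) ⟨T, hTX, rfl⟩
  rw [key T] at hz
  rw [odd_iff_cast] at hodd
  exact one_ne_zero (hodd ▸ hz)
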